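/- Let h_m, h_e, g_m, g_e, σ, P_j be positive reals with h_m > h_e. Then the function P_s ↦ log₂(1 + P_s h_m²/(σ² + P_j g_m²)) − log₂(1 + P_s h_e²/(σ² + P_j g_e²)) is strictly increasing and strictly concave on (0,∞) if and only if h_m²/(σ² + P_j g_m²) > h_e²/(σ² + P_j g_e²); in particular, if g_e ≥ g_m and h_m > h_e it is strictly increasing and strictly concave. -/

import Mathlib

open Real Set

lemma aux_mono (a b : ℝ) (ha : 0 < a) (hb : 0 < b) (hab : b < a) :
    StrictMonoOn (fun x : ℝ => Real.logb 2 (1 + x * a) - Real.logb 2 (1 + x * b)) (Set.Ioi 0) := by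
  intro x hx y hy hxy
  simp only [Set.mem_Ioi] at hx hy
  have h1 : (0:ℝ) < 1 + x * a := by nlinarith
  have h2 : (0:ℝ) < 1 + x * b := by nlinarith
  have h3 : (0:ℝ) < 1 + y * a := by nlinarith
  have h4 : (0:ℝ) < 1 + y * b := by nlinarith
  have key : (1 + x * a) * (1 + y * b) < (1 + y * a) * (1 + x * b) := by nlinarith
  have := Real.logb_lt_logb (b := 2) one_lt_two (mul_pos h1 h4) key
  rw [Real.logb_mul h1.ne' h4.ne', Real.logb_mul h3.ne' h2.ne'] at this
  dsimp only
  linarith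

lemma aux_concave (a b : ℝ) (ha : 0 < a) (hb : 0 < b) (hab : b < a) :
    StrictConcaveOn ℝ (Set.Ioi 0) (fun x : ℝ => Real.logb 2 (1 + x * a) - Real.logb 2 (1 + x * b)) := by
  set f : ℝ → ℝ := fun x => Real.logb 2 (1 + x * a) - Real.logb 2 (1 + x * b) with hf
  set f' : ℝ → ℝ := fun x => (a / Real.log 2) * (1 + x * a)⁻¹ - (b / Real.log 2) * (1 + x * b)⁻¹ with hf'
  have hl2 : (0:ℝ) < Real.log 2 := Real.log_pos one_lt_two
  have hderiv : ∀ x ∈ Set.Ioi (0:ℝ), HasDerivAt f (f' x) x := by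
    intro x hx
    simp only [Set.mem_Ioi] at hx
    have h1 : (0:ℝ) < 1 + x * a := by nlinarith
    have h2 : (0:ℝ) < 1 + x * b := by nlinarith
    have da : HasDerivAt (fun x : ℝ => 1 + x * a) a x := by
      simpa using ((hasDerivAt_id x).mul_const a).const_add 1
    have db : HasDerivAt (fun x : ℝ => 1 + x * b) b x := by
      simpa using ((hasDerivAt_id x).mul_const b).const_add 1
    have la : HasDerivAt (fun x : ℝ => Real.log (1 + x * a)) ((1 + x * a)⁻¹ * a) x :=
      by have := (Real.hasDerivAt_log h1.ne').comp x da; exact this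
    have lb : HasDerivAt (fun x : ℝ => Real.log (1 + x * b)) ((1 + x * b)⁻¹ * b) x :=
      by have := (Real.hasDerivAt_log h2.ne').comp x db; exact this
    have : HasDerivAt f ((1 + x * a)⁻¹ * a / Real.log 2 - (1 + x * b)⁻¹ * b / Real.log 2) x := by
      simp only [hf, Real.logb]
      exact (la.div_const _).sub (lb.div_const _)
    convert this using 1
    simp only [hf']
    ring
  have hderiv_eq : ∀ x ∈ Set.Ioi (0:ℝ), deriv f x = f' x := fun x hx => (hderiv x hx).deriv
  have hcont : ContinuousOn f (Set.Ioi 0) := fun x hx => ((hderiv x hx).continuousAt).continuousWithinAt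
  apply strictConcaveOn_of_deriv2_neg (convex_Ioi 0) hcont
  intro x hx
  rw [interior_Ioi] at hx
  have hx' : 0 < x := hx
  have h1 : (0:ℝ) < 1 + x * a := by nlinarith
  have h2 : (0:ℝ) < 1 + x * b := by nlinarith
  have heq : deriv f =ᶠ[nhds x] f' := by
    filter_upwards [IsOpen.mem_nhds isOpen_Ioi hx] with y hy
    exact hderiv_eq y hy
  have hd2 : deriv (deriv f) x = deriv f' x := heq.deriv_eq
  have dfa : HasDerivAt (fun x : ℝ => (1 + x * a)⁻¹) (-a / (1 + x * a) ^ 2) x := by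
    have da : HasDerivAt (fun x : ℝ => 1 + x * a) a x := by
      simpa using ((hasDerivAt_id x).mul_const a).const_add 1
    exact da.inv h1.ne'
  have dfb : HasDerivAt (fun x : ℝ => (1 + x * b)⁻¹) (-b / (1 + x * b) ^ 2) x := by
    have db : HasDerivAt (fun x : ℝ => 1 + x * b) b x := by
      simpa using ((hasDerivAt_id x).mul_const b).const_add 1
    exact db.inv h2.ne'
  have d2 : HasDerivAt f' ((a / Real.log 2) * (-a / (1 + x * a) ^ 2) -
      (b / Real.log 2) * (-b / (1 + x * b) ^ 2)) x := by
    exact (dfa.const_mul _).sub (dfb.const_mul _)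
  have : deriv f' x = (a / Real.log 2) * (-a / (1 + x * a) ^ 2) -
      (b / Real.log 2) * (-b / (1 + x * b) ^ 2) := d2.deriv
  simp only [Function.iterate_succ, Function.iterate_zero, Function.comp_apply, id_eq]
  rw [hd2, this]
  have key : b * (1 + x * a) < a * (1 + x * b) := by nlinarith
  have h5 : b ^ 2 * (1 + x * a) ^ 2 < a ^ 2 * (1 + x * b) ^ 2 := by
    have := pow_lt_pow_left₀ key (by positivity : (0:ℝ) ≤ b * (1 + x * a)) two_ne_zero
    calc b ^ 2 * (1 + x * a) ^ 2 = (b * (1 + x * a)) ^ 2 := by ring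
      _ < (a * (1 + x * b)) ^ 2 := this
      _ = a ^ 2 * (1 + x * b) ^ 2 := by ring
  rw [sub_neg]
  rw [div_mul_div_comm, div_mul_div_comm, div_lt_div_iff₀ (by positivity) (by positivity)]
  ring_nf
  nlinarith [h5, hl2, sq_nonneg (1 + x*a), sq_nonneg (1 + x*b)]

lemma aux_not_mono (a b : ℝ) (ha : 0 < a) (hb : 0 < b) (hab : a ≤ b) :
    ¬ StrictMonoOn (fun x : ℝ => Real.logb 2 (1 + x * a) - Real.logb 2 (1 + x * b)) (Set.Ioi 0) := by
  intro h
  have h12 := h (Set.mem_Ioi.mpr one_pos) (Set.mem_Ioi.mpr two_pos) one_lt_two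
  have h1 : (0:ℝ) < 1 + 1 * a := by nlinarith
  have h2 : (0:ℝ) < 1 + 1 * b := by nlinarith
  have h3 : (0:ℝ) < 1 + 2 * a := by nlinarith
  have h4 : (0:ℝ) < 1 + 2 * b := by nlinarith
  have key : (1 + 2 * a) * (1 + 1 * b) ≤ (1 + 1 * a) * (1 + 2 * b) := by nlinarith
  have := (Real.logb_le_logb (b := 2) one_lt_two (mul_pos h3 h2) (mul_pos h1 h4)).mpr key
  rw [Real.logb_mul h3.ne' h2.ne', Real.logb_mul h1.ne' h4.ne'] at this
  simp only at h12
  linarith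

theorem secure_rate_with_jammer_source_power_props
    (hm he gm ge σ Pj : ℝ)
    (hhm : 0 < hm) (hhe : 0 < he) (hgm : 0 < gm) (hge : 0 < ge)
    (hσ : 0 < σ) (hPj : 0 < Pj) (hmain : hm > he) :
    ((StrictMonoOn (fun Ps : ℝ =>
          Real.logb 2 (1 + Ps * hm ^ 2 / (σ ^ 2 + Pj * gm ^ 2)) -
            Real.logb 2 (1 + Ps * he ^ 2 / (σ ^ 2 + Pj * ge ^ 2))) (Set.Ioi 0) ∧
      StrictConcaveOn ℝ (Set.Ioi 0) (fun Ps : ℝ =>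
          Real.logb 2 (1 + Ps * hm ^ 2 / (σ ^ 2 + Pj * gm ^ 2)) -
            Real.logb 2 (1 + Ps * he ^ 2 / (σ ^ 2 + Pj * ge ^ 2)))) ↔
      hm ^ 2 / (σ ^ 2 + Pj * gm ^ 2) > he ^ 2 / (σ ^ 2 + Pj * ge ^ 2)) ∧
    (ge ≥ gm →
      StrictMonoOn (fun Ps : ℝ =>
          Real.logb 2 (1 + Ps * hm ^ 2 / (σ ^ 2 + Pj * gm ^ 2)) -
            Real.logb 2 (1 + Ps * he ^ 2 / (σ ^ 2 + Pj * ge ^ 2))) (Set.Ioi 0) ∧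
      StrictConcaveOn ℝ (Set.Ioi 0) (fun Ps : ℝ =>
          Real.logb 2 (1 + Ps * hm ^ 2 / (σ ^ 2 + Pj * gm ^ 2)) -
            Real.logb 2 (1 + Ps * he ^ 2 / (σ ^ 2 + Pj * ge ^ 2)))) := by
  set a : ℝ := hm ^ 2 / (σ ^ 2 + Pj * gm ^ 2) with ha_def
  set b : ℝ := he ^ 2 / (σ ^ 2 + Pj * ge ^ 2) with hb_def
  have hDm : (0:ℝ) < σ ^ 2 + Pj * gm ^ 2 := by positivity
  have hDe : (0:ℝ) < σ ^ 2 + Pj * ge ^ 2 := by positivity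
  have ha : 0 < a := by positivity
  have hb : 0 < b := by positivity
  have hfun : ∀ Ps : ℝ, Ps * hm ^ 2 / (σ ^ 2 + Pj * gm ^ 2) = Ps * a := fun Ps => by
    rw [ha_def]; ring
  have hfun' : ∀ Ps : ℝ, Ps * he ^ 2 / (σ ^ 2 + Pj * ge ^ 2) = Ps * b := fun Ps => by
    rw [hb_def]; ring
  simp only [hfun, hfun']
  constructor
  · constructor
    · rintro ⟨hmono, _⟩
      by_contra hle
      push_neg at hle
      exact aux_not_mono a b ha hb hle hmono
    · intro hab
      exact ⟨aux_mono a b ha hb hab, aux_concave a b ha hb hab⟩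
  · intro hge
    have hab : b < a := by
      rw [ha_def, hb_def, div_lt_div_iff₀ hDe hDm]
      have h2 : he ^ 2 < hm ^ 2 := by nlinarith
      have hg2 : gm ^ 2 ≤ ge ^ 2 := by nlinarith [mul_le_mul hge hge hgm.le (hgm.le.trans hge)]
      have h3 : σ ^ 2 + Pj * gm ^ 2 ≤ σ ^ 2 + Pj * ge ^ 2 := by nlinarith
      calc he ^ 2 * (σ ^ 2 + Pj * gm ^ 2) < hm ^ 2 * (σ ^ 2 + Pj * gm ^ 2) :=
            mul_lt_mul_of_pos_right h2 hDm
        _ ≤ hm ^ 2 * (σ ^ 2 + Pj * ge ^ 2) := by nlinarith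
    exact ⟨aux_mono a b ha hb hab, aux_concave a b ha hb hab⟩
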